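/- Let N ∈ (1,∞), K ∈ ℝ, and let h : I → (0,∞) be a C² function on an open interval I ⊆ ℝ. Then h satisfies the differential inequality (h^{1/(N−1)})'' + (K/(N−1)) h^{1/(N−1)} ≤ 0 on I if and only if h satisfies the convexity inequality h((1−s)t₀ + s t₁)^{1/(N−1)} ≥ σ_{K,N−1}^{(1−s)}(t₁−t₀) h(t₀)^{1/(N−1)} + σ_{K,N−1}^{(s)}(t₁−t₀) h(t₁)^{1/(N−1)} for all t₀,t₁ ∈ I with t₀ < t₁ and all s ∈ [0,1]. -/

import Mathlib

open scoped ENNReal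

/-- The distortion coefficients σ_{K,N'}^{(s)}(θ), valued in [0,∞] (⊤ when Kθ² ≥ N'π²). -/
noncomputable def sigmaCoeff (K N' s θ : ℝ) : ℝ≥0∞ :=
  if N' * Real.pi ^ 2 ≤ K * θ ^ 2 then ⊤
  else if 0 < K * θ ^ 2 then
    ENNReal.ofReal (Real.sin (s * θ * Real.sqrt (K / N')) / Real.sin (θ * Real.sqrt (K / N')))
  else if K * θ ^ 2 = 0 then ENNReal.ofReal s
  else
    ENNReal.ofReal (Real.sinh (s * θ * Real.sqrt (-K / N')) / Real.sinh (θ * Real.sqrt (-K / N')))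

/-- The synthetic CD(K,N) convexity inequality for a one-dimensional density h on a set I. -/
def CDconv (K N : ℝ) (I : Set ℝ) (h : ℝ → ℝ) : Prop :=
  ∀ t₀ ∈ I, ∀ t₁ ∈ I, t₀ < t₁ → ∀ s ∈ Set.Icc (0:ℝ) 1,
    sigmaCoeff K (N-1) (1-s) (t₁ - t₀) * ENNReal.ofReal (h t₀ ^ (1/(N-1))) +
      sigmaCoeff K (N-1) s (t₁ - t₀) * ENNReal.ofReal (h t₁ ^ (1/(N-1))) ≤
    ENNReal.ofReal (h ((1-s) * t₀ + s * t₁) ^ (1/(N-1)))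

open Set


section Sturm
variable {t₀ t₁ lam : ℝ} {w w' w'' φ φ' φ'' : ℝ → ℝ}

/-- Wronskian derivative computation. -/
lemma wronskian_deriv
    (hw : ∀ t ∈ Icc t₀ t₁, HasDerivAt w (w' t) t)
    (hw' : ∀ t ∈ Icc t₀ t₁, HasDerivAt w' (w'' t) t)
    (hφ : ∀ t, HasDerivAt φ (φ' t) t)
    (hφ' : ∀ t, HasDerivAt φ' (φ'' t) t)
    (hφeq : ∀ t, φ'' t = -lam * φ t) :
    ∀ t ∈ Icc t₀ t₁, HasDerivAt (fun t => φ t * w' t - w t * φ' t)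
      (φ t * (w'' t + lam * w t)) t := by
  intro t ht
  have H := ((hφ t).mul (hw' t ht)).sub ((hw t ht).mul (hφ' t))
  have : φ' t * w' t + φ t * w'' t - (w' t * φ' t + w t * φ'' t)
      = φ t * (w'' t + lam * w t) := by rw [hφeq t]; ring
  rwa [this] at H

lemma quotient_deriv
    (hw : ∀ t ∈ Icc t₀ t₁, HasDerivAt w (w' t) t)
    (hφ : ∀ t, HasDerivAt φ (φ' t) t)
    (hφpos : ∀ t ∈ Icc t₀ t₁, 0 < φ t) :
    ∀ t ∈ Icc t₀ t₁, HasDerivAt (fun t => w t / φ t)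
      ((φ t * w' t - w t * φ' t) / φ t ^ 2) t := by
  intro t ht
  have H := (hw t ht).div (hφ t) (hφpos t ht).ne'
  have : (w' t * φ t - w t * φ' t) / φ t ^ 2
      = (φ t * w' t - w t * φ' t) / φ t ^ 2 := by ring_nf
  rwa [this] at H

/-- Weak Sturm comparison: a supersolution vanishing at the endpoints is nonnegative,
provided there exists a positive solution φ on the interval. -/
lemma sturm_nonneg (h01 : t₀ < t₁)
    (hw : ∀ t ∈ Icc t₀ t₁, HasDerivAt w (w' t) t)
    (hw' : ∀ t ∈ Icc t₀ t₁, HasDerivAt w' (w'' t) t)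
    (hφ : ∀ t, HasDerivAt φ (φ' t) t)
    (hφ' : ∀ t, HasDerivAt φ' (φ'' t) t)
    (hφpos : ∀ t ∈ Icc t₀ t₁, 0 < φ t)
    (hφeq : ∀ t, φ'' t = -lam * φ t)
    (hineq : ∀ t ∈ Icc t₀ t₁, w'' t + lam * w t ≤ 0)
    (h0 : w t₀ = 0) (h1 : w t₁ = 0) :
    ∀ t ∈ Icc t₀ t₁, 0 ≤ w t := by
  set W : ℝ → ℝ := fun t => φ t * w' t - w t * φ' t with hW
  have hWd := wronskian_deriv hw hw' hφ hφ' hφeq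
  have hq := quotient_deriv hw hφ hφpos
  -- W is antitone on the interval
  have hWanti : AntitoneOn W (Icc t₀ t₁) := by
    apply antitoneOn_of_deriv_nonpos (convex_Icc _ _)
    · exact fun t ht => ((hWd t ht).continuousAt).continuousWithinAt
    · intro t ht
      rw [interior_Icc] at ht
      exact ((hWd t (Ioo_subset_Icc_self ht)).differentiableAt).differentiableWithinAt
    · intro t ht
      rw [interior_Icc] at ht
      rw [(hWd t (Ioo_subset_Icc_self ht)).deriv]
      exact mul_nonpos_of_nonneg_of_nonpos (hφpos t (Ioo_subset_Icc_self ht)).le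
        (hineq t (Ioo_subset_Icc_self ht))
  by_contra hcon
  push_neg at hcon
  obtain ⟨c, hc, hcneg⟩ := hcon
  have hc0 : t₀ < c := by
    rcases eq_or_lt_of_le hc.1 with h | h
    · exact absurd (h ▸ h0) (by rw [← h] at hcneg; linarith)
    · exact h
  have hc1 : c < t₁ := by
    rcases eq_or_lt_of_le hc.2 with h | h
    · exact absurd (h ▸ h1) (by rw [h] at hcneg; linarith)
    · exact h
  set q : ℝ → ℝ := fun t => w t / φ t with hqdef
  have hsub1 : Icc t₀ c ⊆ Icc t₀ t₁ := Icc_subset_Icc le_rfl hc1.le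
  have hsub2 : Icc c t₁ ⊆ Icc t₀ t₁ := Icc_subset_Icc hc0.le le_rfl
  have hq0 : q t₀ = 0 := by simp [hqdef, h0]
  have hq1 : q t₁ = 0 := by simp [hqdef, h1]
  have hqc : q c < 0 := div_neg_of_neg_of_pos hcneg (hφpos c hc)
  obtain ⟨ξ, hξ, hξeq⟩ := exists_hasDerivAt_eq_slope q (fun t => W t / φ t ^ 2) hc0
    (fun t ht => ((hq t (hsub1 ht)).continuousAt).continuousWithinAt)
    (fun t ht => hq t (hsub1 (Ioo_subset_Icc_self ht)))
  obtain ⟨η, hη, hηeq⟩ := exists_hasDerivAt_eq_slope q (fun t => W t / φ t ^ 2) hc1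
    (fun t ht => ((hq t (hsub2 ht)).continuousAt).continuousWithinAt)
    (fun t ht => hq t (hsub2 (Ioo_subset_Icc_self ht)))
  have hφξ : (0:ℝ) < φ ξ ^ 2 := pow_pos (hφpos ξ (hsub1 (Ioo_subset_Icc_self hξ))) 2
  have hφη : (0:ℝ) < φ η ^ 2 := pow_pos (hφpos η (hsub2 (Ioo_subset_Icc_self hη))) 2
  have hWξ : W ξ < 0 := by
    have hx : W ξ / φ ξ ^ 2 < 0 := by
      rw [hξeq, hq0]
      exact div_neg_of_neg_of_pos (by linarith) (by linarith)
    by_contra hle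
    push_neg at hle
    exact absurd (div_nonneg hle hφξ.le) (not_le.mpr hx)
  have hWη : 0 < W η := by
    have hx : 0 < W η / φ η ^ 2 := by
      rw [hηeq, hq1]
      exact div_pos (by linarith) (by linarith)
    by_contra hle
    push_neg at hle
    exact absurd (div_nonpos_of_nonpos_of_nonneg hle hφη.le) (not_le.mpr hx)
  have : W η ≤ W ξ := hWanti (hsub1 (Ioo_subset_Icc_self hξ)) (hsub2 (Ioo_subset_Icc_self hη))
    (le_of_lt (lt_trans hξ.2 hη.1))
  linarith

/-- Strict Sturm comparison: a strict subsolution vanishing at the endpoints is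
negative at the midpoint. -/
lemma sturm_strict (h01 : t₀ < t₁)
    (hw : ∀ t ∈ Icc t₀ t₁, HasDerivAt w (w' t) t)
    (hw' : ∀ t ∈ Icc t₀ t₁, HasDerivAt w' (w'' t) t)
    (hφ : ∀ t, HasDerivAt φ (φ' t) t)
    (hφ' : ∀ t, HasDerivAt φ' (φ'' t) t)
    (hφpos : ∀ t ∈ Icc t₀ t₁, 0 < φ t)
    (hφeq : ∀ t, φ'' t = -lam * φ t)
    (hineq : ∀ t ∈ Icc t₀ t₁, 0 < w'' t + lam * w t)
    (h0 : w t₀ = 0) (h1 : w t₁ = 0) :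
    w ((t₀ + t₁)/2) < 0 := by
  set W : ℝ → ℝ := fun t => φ t * w' t - w t * φ' t with hWdef
  have hWd := wronskian_deriv hw hw' hφ hφ' hφeq
  have hq := quotient_deriv hw hφ hφpos
  set m : ℝ := (t₀ + t₁)/2 with hmdef
  have hm0 : t₀ < m := by rw [hmdef]; linarith
  have hm1 : m < t₁ := by rw [hmdef]; linarith
  have hmem : m ∈ Icc t₀ t₁ := ⟨hm0.le, hm1.le⟩
  have hWmono : StrictMonoOn W (Icc t₀ t₁) := by
    apply strictMonoOn_of_deriv_pos (convex_Icc _ _)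
    · exact fun t ht => ((hWd t ht).continuousAt).continuousWithinAt
    · intro t ht
      rw [interior_Icc] at ht
      rw [(hWd t (Ioo_subset_Icc_self ht)).deriv]
      exact mul_pos (hφpos t (Ioo_subset_Icc_self ht)) (hineq t (Ioo_subset_Icc_self ht))
  set q : ℝ → ℝ := fun t => w t / φ t with hqdef
  have hq0 : q t₀ = 0 := by simp [hqdef, h0]
  have hq1 : q t₁ = 0 := by simp [hqdef, h1]
  have key : q m < 0 := by
    rcases le_or_gt 0 (W m) with hWm | hWm
    · -- q strictly increasing on [m, t₁]
      have hsub : Icc m t₁ ⊆ Icc t₀ t₁ := Icc_subset_Icc hm0.le le_rfl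
      have : StrictMonoOn q (Icc m t₁) := by
        apply strictMonoOn_of_deriv_pos (convex_Icc _ _)
        · exact fun t ht => ((hq t (hsub ht)).continuousAt).continuousWithinAt
        · intro t ht
          rw [interior_Icc] at ht
          have htI : t ∈ Icc t₀ t₁ := hsub (Ioo_subset_Icc_self ht)
          rw [(hq t htI).deriv]
          have hWt : 0 < W t := lt_of_le_of_lt hWm (hWmono hmem htI ht.1)
          exact div_pos hWt (pow_pos (hφpos t htI) 2)
      have := this (left_mem_Icc.mpr hm1.le) (right_mem_Icc.mpr hm1.le) hm1
      rwa [hq1] at this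
    · -- q strictly decreasing on [t₀, m]
      have hsub : Icc t₀ m ⊆ Icc t₀ t₁ := Icc_subset_Icc le_rfl hm1.le
      have : StrictAntiOn q (Icc t₀ m) := by
        apply strictAntiOn_of_deriv_neg (convex_Icc _ _)
        · exact fun t ht => ((hq t (hsub ht)).continuousAt).continuousWithinAt
        · intro t ht
          rw [interior_Icc] at ht
          have htI : t ∈ Icc t₀ t₁ := hsub (Ioo_subset_Icc_self ht)
          rw [(hq t htI).deriv]
          have hWt : W t < 0 := lt_trans (hWmono htI hmem ht.2) hWm
          exact div_neg_of_neg_of_pos hWt (pow_pos (hφpos t htI) 2)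
      have := this (left_mem_Icc.mpr hm0.le) (right_mem_Icc.mpr hm0.le) hm0
      rwa [hq0] at this
  have hφm := hφpos m hmem
  by_contra hle
  push_neg at hle
  exact absurd (div_nonneg hle hφm.le) (not_le.mpr key)

end Sturm


lemma sigmaCoeff_eq_of_pos {K N' θ : ℝ} (hN' : 0 < N') (hθ : 0 < θ) (hK : 0 < K)
    (hsmall : K / N' * θ ^ 2 < Real.pi ^ 2) (s : ℝ) :
    sigmaCoeff K N' s θ
      = ENNReal.ofReal (Real.sin (s * θ * Real.sqrt (K / N')) / Real.sin (θ * Real.sqrt (K / N'))) := by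
  have h1 : ¬ (N' * Real.pi ^ 2 ≤ K * θ ^ 2) := by
    push_neg
    have := (mul_lt_mul_iff_right₀ hN').mpr hsmall
    have hne : N' ≠ 0 := hN'.ne'
    calc K * θ ^ 2 = N' * (K / N' * θ ^ 2) := by field_simp
    _ < N' * Real.pi ^ 2 := this
  have h2 : 0 < K * θ ^ 2 := by positivity
  simp [sigmaCoeff, h1, h2]

lemma sigmaCoeff_eq_of_zero {K N' θ : ℝ} (hN' : 0 < N') (hθ : 0 < θ) (hK : K = 0) (s : ℝ) :
    sigmaCoeff K N' s θ = ENNReal.ofReal s := by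
  have hπ : 0 < N' * Real.pi ^ 2 := by positivity
  simp [sigmaCoeff, hK, not_le.mpr hπ]

lemma sigmaCoeff_eq_of_neg {K N' θ : ℝ} (hN' : 0 < N') (hθ : 0 < θ) (hK : K < 0) (s : ℝ) :
    sigmaCoeff K N' s θ
      = ENNReal.ofReal (Real.sinh (s * θ * Real.sqrt (-K / N')) / Real.sinh (θ * Real.sqrt (-K / N'))) := by
  have hKθ : K * θ ^ 2 < 0 := mul_neg_of_neg_of_pos hK (by positivity)
  have hπ : 0 < N' * Real.pi ^ 2 := by positivity
  have h1 : ¬ (N' * Real.pi ^ 2 ≤ K * θ ^ 2) := by push_neg; linarith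
  simp [sigmaCoeff, h1, not_lt.mpr hKθ.le, hKθ.ne]

lemma exists_comparison (K N' : ℝ) (hN' : 0 < N') {t₀ t₁ : ℝ} (h01 : t₀ < t₁)
    (hsmall : K / N' * (t₁ - t₀) ^ 2 < Real.pi ^ 2) (u₀ u₁ : ℝ) :
    ∃ (v v' φ φ' : ℝ → ℝ) (σ : ℝ → ℝ),
      (∀ t, HasDerivAt v (v' t) t) ∧ (∀ t, HasDerivAt v' (-(K/N') * v t) t) ∧
      (∀ t, HasDerivAt φ (φ' t) t) ∧ (∀ t, HasDerivAt φ' (-(K/N') * φ t) t) ∧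
      (∀ t ∈ Icc t₀ t₁, 0 < φ t) ∧
      v t₀ = u₀ ∧ v t₁ = u₁ ∧
      (∀ s ∈ Icc (0:ℝ) 1, 0 ≤ σ s) ∧
      (∀ s : ℝ, sigmaCoeff K N' s (t₁ - t₀) = ENNReal.ofReal (σ s)) ∧
      (∀ s : ℝ, v ((1-s) * t₀ + s * t₁) = σ (1-s) * u₀ + σ s * u₁) := by
  have hθpos : 0 < t₁ - t₀ := sub_pos.mpr h01
  rcases lt_trichotomy K 0 with hK | hK | hK
  · -- K < 0 : hyperbolic case
    set r := Real.sqrt (-K / N') with hrdef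
    have hlam : 0 < -K / N' := div_pos (by linarith) hN'
    have hr : 0 < r := Real.sqrt_pos.mpr hlam
    have hr2 : r * r = -K / N' := Real.mul_self_sqrt hlam.le
    have hr2' : K / N' = -(r * r) := by rw [hr2]; ring
    have hD : 0 < Real.sinh ((t₁ - t₀) * r) := Real.sinh_pos_iff.mpr (by positivity)
    have hA : ∀ t : ℝ, HasDerivAt (fun t => r * (t₁ - t)) (-r) t := fun t => by
      simpa using ((hasDerivAt_id t).const_sub t₁).const_mul r
    have hB : ∀ t : ℝ, HasDerivAt (fun t => r * (t - t₀)) r t := fun t => by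
      simpa using ((hasDerivAt_id t).sub_const t₀).const_mul r
    have hC : ∀ t : ℝ, HasDerivAt (fun t => r * t) r t := fun t => by
      simpa using (hasDerivAt_id t).const_mul r
    refine ⟨fun t => (u₀ * Real.sinh (r*(t₁-t)) + u₁ * Real.sinh (r*(t-t₀))) / Real.sinh ((t₁-t₀)*r),
        fun t => (u₀ * (Real.cosh (r*(t₁-t)) * (-r)) + u₁ * (Real.cosh (r*(t-t₀)) * r)) / Real.sinh ((t₁-t₀)*r),
        fun t => Real.cosh (r*t), fun t => Real.sinh (r*t) * r,
        fun s => Real.sinh (s*(t₁-t₀)*r) / Real.sinh ((t₁-t₀)*r),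
        ?_, ?_, ?_, ?_, ?_, ?_, ?_, ?_, ?_, ?_⟩
    · intro t
      exact (((hA t).sinh.const_mul u₀).add ((hB t).sinh.const_mul u₁)).div_const _
    · intro t
      have H := ((((hA t).cosh.mul_const (-r)).const_mul u₀).add
        (((hB t).cosh.mul_const r).const_mul u₁)).div_const (Real.sinh ((t₁-t₀)*r))
      convert H using 1; rfl; rfl; rfl
      rw [hr2']; ring
    · intro t
      exact (hC t).cosh
    · intro t
      have H := (hC t).sinh.mul_const r
      convert H using 1; rfl; rfl
      rw [hr2']; ring
    · intro t _
      exact Real.cosh_pos (r*t)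
    · show (u₀ * Real.sinh (r*(t₁-t₀)) + u₁ * Real.sinh (r*(t₀-t₀))) / Real.sinh ((t₁-t₀)*r) = u₀
      rw [show r*(t₁-t₀) = (t₁-t₀)*r by ring, show r*(t₀-t₀) = 0 by ring]
      simp
      field_simp
    · show (u₀ * Real.sinh (r*(t₁-t₁)) + u₁ * Real.sinh (r*(t₁-t₀))) / Real.sinh ((t₁-t₀)*r) = u₁
      rw [show r*(t₁-t₁) = 0 by ring, show r*(t₁-t₀) = (t₁-t₀)*r by ring]
      simp
      field_simp
    · intro s hs
      refine div_nonneg (Real.sinh_nonneg_iff.mpr ?_) hD.le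
      have := hs.1
      positivity
    · intro s
      rw [sigmaCoeff_eq_of_neg hN' hθpos hK s, ← hrdef]
    · intro s
      show (u₀ * Real.sinh (r*(t₁ - ((1-s)*t₀+s*t₁))) + u₁ * Real.sinh (r*(((1-s)*t₀+s*t₁) - t₀))) / Real.sinh ((t₁-t₀)*r) = _
      rw [show r*(t₁ - ((1-s)*t₀+s*t₁)) = (1-s)*(t₁-t₀)*r by ring,
        show r*(((1-s)*t₀+s*t₁) - t₀) = s*(t₁-t₀)*r by ring]
      ring
  · -- K = 0 : linear case
    refine ⟨fun t => (u₀*(t₁-t) + u₁*(t-t₀))/(t₁-t₀), fun _ => (u₀*(-1) + u₁*1)/(t₁-t₀),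
        fun _ => 1, fun _ => 0, fun s => s, ?_, ?_, ?_, ?_, ?_, ?_, ?_, ?_, ?_, ?_⟩
    · intro t
      exact ((((hasDerivAt_id t).const_sub t₁).const_mul u₀).add
        (((hasDerivAt_id t).sub_const t₀).const_mul u₁)).div_const _
    · intro t
      have H := hasDerivAt_const t ((u₀*(-1) + u₁*1)/(t₁-t₀))
      convert H using 1; rfl; rfl
      rw [hK]; ring
    · intro t
      exact hasDerivAt_const t 1
    · intro t
      have H := hasDerivAt_const t (0:ℝ)
      convert H using 1; rfl; rfl
      rw [hK]; ring
    · intro t _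
      exact one_pos
    · field_simp; ring
    · field_simp; ring
    · intro s hs
      exact hs.1
    · intro s
      exact sigmaCoeff_eq_of_zero hN' hθpos hK s
    · intro s
      field_simp
      ring
  · -- K > 0 : trigonometric case
    set r := Real.sqrt (K / N') with hrdef
    have hlam : 0 < K / N' := div_pos hK hN'
    have hr : 0 < r := Real.sqrt_pos.mpr hlam
    have hr2 : r * r = K / N' := Real.mul_self_sqrt hlam.le
    have hr2' : K / N' = -(-(r * r)) := by rw [hr2]; ring
    have hθr : (t₁ - t₀) * r < Real.pi := by
      have hsq : ((t₁-t₀)*r)^2 = K/N' * (t₁-t₀)^2 := by rw [← hr2]; ring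
      refine lt_of_pow_lt_pow_left₀ 2 Real.pi_pos.le ?_
      rw [hsq]; exact hsmall
    have hD : 0 < Real.sin ((t₁ - t₀) * r) :=
      Real.sin_pos_of_pos_of_lt_pi (by positivity) hθr
    set α := t₀ - (Real.pi - (t₁-t₀)*r)/(2*r) with hαdef
    have hA : ∀ t : ℝ, HasDerivAt (fun t => r * (t₁ - t)) (-r) t := fun t => by
      simpa using ((hasDerivAt_id t).const_sub t₁).const_mul r
    have hB : ∀ t : ℝ, HasDerivAt (fun t => r * (t - t₀)) r t := fun t => by
      simpa using ((hasDerivAt_id t).sub_const t₀).const_mul r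
    have hC : ∀ t : ℝ, HasDerivAt (fun t => r * (t - α)) r t := fun t => by
      simpa using ((hasDerivAt_id t).sub_const α).const_mul r
    refine ⟨fun t => (u₀ * Real.sin (r*(t₁-t)) + u₁ * Real.sin (r*(t-t₀))) / Real.sin ((t₁-t₀)*r),
        fun t => (u₀ * (Real.cos (r*(t₁-t)) * (-r)) + u₁ * (Real.cos (r*(t-t₀)) * r)) / Real.sin ((t₁-t₀)*r),
        fun t => Real.sin (r*(t-α)), fun t => Real.cos (r*(t-α)) * r,
        fun s => Real.sin (s*(t₁-t₀)*r) / Real.sin ((t₁-t₀)*r),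
        ?_, ?_, ?_, ?_, ?_, ?_, ?_, ?_, ?_, ?_⟩
    · intro t
      exact (((hA t).sin.const_mul u₀).add ((hB t).sin.const_mul u₁)).div_const _
    · intro t
      have H := ((((hA t).cos.mul_const (-r)).const_mul u₀).add
        (((hB t).cos.mul_const r).const_mul u₁)).div_const (Real.sin ((t₁-t₀)*r))
      convert H using 1; rfl; rfl; rfl
      rw [hr2']; ring
    · intro t
      exact (hC t).sin
    · intro t
      have H := (hC t).cos.mul_const r
      convert H using 1; rfl; rfl
      rw [hr2']; ring
    · intro t ht
      have harg : r * (t - α) = r * (t - t₀) + (Real.pi - (t₁-t₀)*r)/2 := by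
        rw [hαdef]; field_simp; ring
      have h1 : 0 ≤ r * (t - t₀) := mul_nonneg hr.le (by linarith [ht.1])
      have h2 : r * (t - t₀) ≤ (t₁-t₀)*r := by nlinarith [ht.2, hr.le]
      apply Real.sin_pos_of_pos_of_lt_pi <;> rw [harg] <;> nlinarith [Real.pi_pos]
    · show (u₀ * Real.sin (r*(t₁-t₀)) + u₁ * Real.sin (r*(t₀-t₀))) / Real.sin ((t₁-t₀)*r) = u₀
      rw [show r*(t₁-t₀) = (t₁-t₀)*r by ring, show r*(t₀-t₀) = 0 by ring]
      simp
      field_simp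
    · show (u₀ * Real.sin (r*(t₁-t₁)) + u₁ * Real.sin (r*(t₁-t₀))) / Real.sin ((t₁-t₀)*r) = u₁
      rw [show r*(t₁-t₁) = 0 by ring, show r*(t₁-t₀) = (t₁-t₀)*r by ring]
      simp
      field_simp
    · intro s hs
      have hs1 := hs.1
      refine div_nonneg (Real.sin_nonneg_of_nonneg_of_le_pi (by positivity) ?_) hD.le
      have : s*(t₁-t₀)*r ≤ (t₁-t₀)*r := by nlinarith [mul_nonneg (sub_nonneg.mpr hs.2) (mul_pos hθpos hr).le]
      linarith
    · intro s
      rw [sigmaCoeff_eq_of_pos hN' hθpos hK hsmall s, ← hrdef]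
    · intro s
      show (u₀ * Real.sin (r*(t₁ - ((1-s)*t₀+s*t₁))) + u₁ * Real.sin (r*(((1-s)*t₀+s*t₁) - t₀))) / Real.sin ((t₁-t₀)*r) = _
      rw [show r*(t₁ - ((1-s)*t₀+s*t₁)) = (1-s)*(t₁-t₀)*r by ring,
        show r*(((1-s)*t₀+s*t₁) - t₀) = s*(t₁-t₀)*r by ring]
      ring

lemma supersol_small {K N' a b : ℝ} (hN' : 0 < N') {u u' u'' : ℝ → ℝ}
    (hu : ∀ t ∈ Ioo a b, HasDerivAt u (u' t) t)
    (hu' : ∀ t ∈ Ioo a b, HasDerivAt u' (u'' t) t)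
    (hupos : ∀ t ∈ Ioo a b, 0 < u t)
    (hode : ∀ t ∈ Ioo a b, u'' t + (K/N') * u t ≤ 0)
    {t₀ t₁ : ℝ} (h0 : t₀ ∈ Ioo a b) (h1 : t₁ ∈ Ioo a b) (h01 : t₀ < t₁) :
    K / N' * (t₁ - t₀)^2 < Real.pi^2 := by
  have hπ2 : (0:ℝ) < Real.pi^2 := by positivity
  rcases le_or_gt (K/N') 0 with hlam | hlam
  · have : K/N' * (t₁-t₀)^2 ≤ 0 := mul_nonpos_of_nonpos_of_nonneg hlam (sq_nonneg _)
    linarith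
  · by_contra hcon
    push_neg at hcon
    set r := Real.sqrt (K/N') with hrdef
    have hr : 0 < r := Real.sqrt_pos.mpr hlam
    have hr2 : r * r = K/N' := Real.mul_self_sqrt hlam.le
    have hπθ : Real.pi ≤ r * (t₁ - t₀) := by
      have hsq : (r*(t₁-t₀))^2 = K/N' * (t₁-t₀)^2 := by rw [← hr2]; ring
      nlinarith [Real.pi_pos, mul_nonneg hr.le (sub_nonneg.mpr h01.le)]
    set t₂ := t₀ + Real.pi / r with ht₂def
    have h0₂ : t₀ < t₂ := by
      rw [ht₂def]
      have : 0 < Real.pi / r := div_pos Real.pi_pos hr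
      linarith
    have h₂1 : t₂ ≤ t₁ := by
      rw [ht₂def]
      rw [← sub_nonneg]
      have : Real.pi / r ≤ t₁ - t₀ := (div_le_iff₀ hr).mpr (by linarith [hπθ])
      linarith
    have hsub : Icc t₀ t₂ ⊆ Ioo a b := fun t ht =>
      ⟨lt_of_lt_of_le h0.1 ht.1, lt_of_le_of_lt ht.2 (lt_of_le_of_lt h₂1 h1.2)⟩
    have hCin : ∀ t : ℝ, HasDerivAt (fun t => r*(t-t₀)) r t := fun t => by
      simpa using ((hasDerivAt_id t).sub_const t₀).const_mul r
    have hφ : ∀ t : ℝ, HasDerivAt (fun t => Real.sin (r*(t-t₀))) (Real.cos (r*(t-t₀)) * r) t :=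
      fun t => (hCin t).sin
    have hφ' : ∀ t : ℝ, HasDerivAt (fun t => Real.cos (r*(t-t₀)) * r)
        ((-Real.sin (r*(t-t₀)) * r) * r) t := fun t => (hCin t).cos.mul_const r
    have hφeq : ∀ t : ℝ, (-Real.sin (r*(t-t₀)) * r) * r = -(K/N') * Real.sin (r*(t-t₀)) := by
      intro t; rw [← hr2]; ring
    have hφnn : ∀ t ∈ Icc t₀ t₂, 0 ≤ Real.sin (r*(t-t₀)) := by
      intro t ht
      apply Real.sin_nonneg_of_nonneg_of_le_pi
      · exact mul_nonneg hr.le (by linarith [ht.1])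
      · have : r * (t - t₀) ≤ r * (t₂ - t₀) := by
          apply mul_le_mul_of_nonneg_left _ hr.le
          linarith [ht.2]
        have h2 : r * (t₂ - t₀) = Real.pi := by
          rw [ht₂def]
          field_simp
          ring
        linarith
    set W : ℝ → ℝ := fun t => Real.sin (r*(t-t₀)) * u' t - u t * (Real.cos (r*(t-t₀)) * r)
      with hWdef
    have hWd : ∀ t ∈ Icc t₀ t₂, HasDerivAt W
        (Real.sin (r*(t-t₀)) * (u'' t + (K/N') * u t)) t := by
      intro t ht
      have H := ((hφ t).mul (hu' t (hsub ht))).sub ((hu t (hsub ht)).mul (hφ' t))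
      have : Real.cos (r*(t-t₀)) * r * u' t + Real.sin (r*(t-t₀)) * u'' t -
          (u' t * (Real.cos (r*(t-t₀)) * r) + u t * (-Real.sin (r*(t-t₀)) * r * r))
          = Real.sin (r*(t-t₀)) * (u'' t + (K/N') * u t) := by
        rw [← hr2]; ring
      rwa [this] at H
    have hWanti : AntitoneOn W (Icc t₀ t₂) := by
      apply antitoneOn_of_deriv_nonpos (convex_Icc _ _)
      · exact fun t ht => ((hWd t ht).continuousAt).continuousWithinAt
      · intro t ht
        rw [interior_Icc] at ht
        exact ((hWd t (Ioo_subset_Icc_self ht)).differentiableAt).differentiableWithinAt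
      · intro t ht
        rw [interior_Icc] at ht
        rw [(hWd t (Ioo_subset_Icc_self ht)).deriv]
        exact mul_nonpos_of_nonneg_of_nonpos (hφnn t (Ioo_subset_Icc_self ht))
          (hode t (hsub (Ioo_subset_Icc_self ht)))
    have hW0 : W t₀ < 0 := by
      have : r * (t₀ - t₀) = 0 := by ring
      rw [hWdef]
      simp only [this, Real.sin_zero, Real.cos_zero, zero_mul, one_mul, zero_sub, neg_lt_zero]
      exact mul_pos (hupos t₀ h0) hr
    have hW2 : 0 < W t₂ := by
      have h2 : r * (t₂ - t₀) = Real.pi := by rw [ht₂def]; field_simp; ring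
      rw [hWdef]
      simp only [h2, Real.sin_pi, Real.cos_pi, zero_mul, zero_sub, neg_one_mul, mul_neg,
        sub_neg_eq_add, zero_add]
      exact mul_pos (hupos t₂ (hsub (right_mem_Icc.mpr h0₂.le))) hr
    have := hWanti (left_mem_Icc.mpr h0₂.le) (right_mem_Icc.mpr h0₂.le) h0₂.le
    linarith

lemma main_forward {K N' a b : ℝ} (hN' : 0 < N') {u u' u'' : ℝ → ℝ}
    (hu : ∀ t ∈ Ioo a b, HasDerivAt u (u' t) t)
    (hu' : ∀ t ∈ Ioo a b, HasDerivAt u' (u'' t) t)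
    (hupos : ∀ t ∈ Ioo a b, 0 < u t)
    (hode : ∀ t ∈ Ioo a b, u'' t + (K/N') * u t ≤ 0) :
    ∀ t₀ ∈ Ioo a b, ∀ t₁ ∈ Ioo a b, t₀ < t₁ → ∀ s ∈ Icc (0:ℝ) 1,
      sigmaCoeff K N' (1-s) (t₁-t₀) * ENNReal.ofReal (u t₀) +
        sigmaCoeff K N' s (t₁-t₀) * ENNReal.ofReal (u t₁)
        ≤ ENNReal.ofReal (u ((1-s)*t₀+s*t₁)) := by
  intro t₀ ht₀ t₁ ht₁ h01 s hs
  have hsub : Icc t₀ t₁ ⊆ Ioo a b := Icc_subset_Ioo ht₀.1 ht₁.2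
  have hsmall := supersol_small hN' hu hu' hupos hode ht₀ ht₁ h01
  obtain ⟨v, v', φ, φ', σ, hv, hv', hφ, hφ', hφpos, hv0, hv1, hσnn, hσeq, hσval⟩ :=
    exists_comparison K N' hN' h01 hsmall (u t₀) (u t₁)
  have hw : ∀ t ∈ Icc t₀ t₁, HasDerivAt (fun t => u t - v t) (u' t - v' t) t :=
    fun t ht => (hu t (hsub ht)).sub (hv t)
  have hw' : ∀ t ∈ Icc t₀ t₁, HasDerivAt (fun t => u' t - v' t)
      (u'' t + (K/N') * v t) t := by
    intro t ht
    have H := (hu' t (hsub ht)).sub (hv' t)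
    have : u'' t - -(K/N') * v t = u'' t + (K/N') * v t := by ring
    rwa [this] at H
  have hineq2 : ∀ t ∈ Icc t₀ t₁, (u'' t + (K/N') * v t) + (K/N') * (u t - v t) ≤ 0 := by
    intro t ht
    have h2 : (u'' t + (K/N') * v t) + (K/N') * (u t - v t) = u'' t + (K/N') * u t := by ring
    rw [h2]
    exact hode t (hsub ht)
  have hge := sturm_nonneg h01 hw hw' hφ hφ' hφpos (fun t => rfl) hineq2
    (by simp [hv0]) (by simp [hv1])
  have hs0 : (0:ℝ) ≤ s := hs.1
  have hs1 : s ≤ 1 := hs.2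
  have hp : (1-s)*t₀+s*t₁ ∈ Icc t₀ t₁ := by
    constructor
    · nlinarith [mul_nonneg hs0 (sub_nonneg.mpr h01.le)]
    · nlinarith [mul_nonneg (sub_nonneg.mpr hs1) (sub_nonneg.mpr h01.le)]
  have hup : σ (1-s) * u t₀ + σ s * u t₁ ≤ u ((1-s)*t₀+s*t₁) := by
    have := hge _ hp
    have h2 := hσval s
    linarith
  have hσnn1 : 0 ≤ σ (1-s) := hσnn (1-s) ⟨by linarith, by linarith⟩
  have hσnn2 : 0 ≤ σ s := hσnn s hs
  rw [hσeq (1-s), hσeq s, ← ENNReal.ofReal_mul hσnn1, ← ENNReal.ofReal_mul hσnn2,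
    ← ENNReal.ofReal_add (mul_nonneg hσnn1 (hupos t₀ ht₀).le)
      (mul_nonneg hσnn2 (hupos t₁ ht₁).le)]
  exact ENNReal.ofReal_le_ofReal hup

lemma main_backward {K N' a b : ℝ} (hN' : 0 < N') {u u' u'' : ℝ → ℝ}
    (hu : ∀ t ∈ Ioo a b, HasDerivAt u (u' t) t)
    (hu' : ∀ t ∈ Ioo a b, HasDerivAt u' (u'' t) t)
    (hupos : ∀ t ∈ Ioo a b, 0 < u t)
    (hu''cont : ContinuousOn u'' (Ioo a b))
    (hcd : ∀ t₀ ∈ Ioo a b, ∀ t₁ ∈ Ioo a b, t₀ < t₁ → ∀ s ∈ Icc (0:ℝ) 1,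
      sigmaCoeff K N' (1-s) (t₁-t₀) * ENNReal.ofReal (u t₀) +
        sigmaCoeff K N' s (t₁-t₀) * ENNReal.ofReal (u t₁)
        ≤ ENNReal.ofReal (u ((1-s)*t₀+s*t₁))) :
    ∀ t ∈ Ioo a b, u'' t + (K/N') * u t ≤ 0 := by
  intro t₂ ht₂
  by_contra hcon
  push_neg at hcon
  -- continuity of the defect
  have hucont : ContinuousOn u (Ioo a b) :=
    fun t ht => ((hu t ht).continuousAt).continuousWithinAt
  have hcont : ContinuousOn (fun t => u'' t + (K/N') * u t) (Ioo a b) :=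
    hu''cont.add (continuousOn_const.mul hucont)
  have hca : ContinuousAt (fun t => u'' t + (K/N') * u t) t₂ :=
    hcont.continuousAt (isOpen_Ioo.mem_nhds ht₂)
  have hev : {t | 0 < u'' t + (K/N') * u t} ∈ nhds t₂ := hca.preimage_mem_nhds (Ioi_mem_nhds hcon)
  have hev2 : {t | 0 < u'' t + (K/N') * u t} ∩ Ioo a b ∈ nhds t₂ :=
    Filter.inter_mem hev (isOpen_Ioo.mem_nhds ht₂)
  obtain ⟨δ, hδpos, hball⟩ := Metric.mem_nhds_iff.mp hev2
  -- choose a small ε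
  set r := Real.sqrt (K/N') with hrdef
  have hrnn : 0 ≤ r := Real.sqrt_nonneg _
  set ε := min (δ/2) (Real.pi / (4*(r+1))) with hεdef
  have hεpos : 0 < ε := lt_min (by linarith) (by positivity)
  have hεδ : ε < δ := lt_of_le_of_lt (min_le_left _ _) (by linarith)
  set t₀ := t₂ - ε with ht₀def
  set t₁ := t₂ + ε with ht₁def
  have h01 : t₀ < t₁ := by rw [ht₀def, ht₁def]; linarith
  have hIsub : Icc t₀ t₁ ⊆ {t | 0 < u'' t + (K/N') * u t} ∩ Ioo a b := by
    intro t ht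
    apply hball
    rw [Metric.mem_ball, Real.dist_eq]
    rw [ht₀def] at ht; rw [ht₁def] at ht
    rw [abs_sub_lt_iff]
    constructor <;> [linarith [ht.2]; linarith [ht.1]]
  have hIsub' : Icc t₀ t₁ ⊆ Ioo a b := fun t ht => (hIsub ht).2
  have hstrict : ∀ t ∈ Icc t₀ t₁, 0 < u'' t + (K/N') * u t := fun t ht => (hIsub ht).1
  have ht₀mem : t₀ ∈ Ioo a b := hIsub' (left_mem_Icc.mpr h01.le)
  have ht₁mem : t₁ ∈ Ioo a b := hIsub' (right_mem_Icc.mpr h01.le)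
  -- smallness
  have hθ : t₁ - t₀ = 2*ε := by rw [ht₀def, ht₁def]; ring
  have hsmall : K/N' * (t₁ - t₀)^2 < Real.pi^2 := by
    rw [hθ]
    rcases le_or_gt (K/N') 0 with hl | hl
    · have h1 : K/N' * (2*ε)^2 ≤ 0 := mul_nonpos_of_nonpos_of_nonneg hl (sq_nonneg _)
      have h2 : (0:ℝ) < Real.pi^2 := by positivity
      linarith
    · have hr : 0 < r := Real.sqrt_pos.mpr hl
      have hr2 : r * r = K/N' := Real.mul_self_sqrt hl.le
      have hε2 : ε ≤ Real.pi / (4*(r+1)) := min_le_right _ _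
      have h2εr : 2*ε*r < Real.pi := by
        have hb : (0:ℝ) < 4*(r+1) := by linarith
        have h3 : 2*ε*r ≤ 2*(Real.pi / (4*(r+1)))*r :=
          by nlinarith [mul_le_mul_of_nonneg_right hε2 hrnn]
        have h4 : 2*(Real.pi / (4*(r+1)))*r < Real.pi := by
          rw [show 2*(Real.pi / (4*(r+1)))*r = Real.pi * (2*r) / (4*(r+1)) by ring]
          rw [div_lt_iff₀ hb]
          nlinarith [Real.pi_pos]
        linarith
      have h2εrnn : 0 ≤ 2*ε*r := by positivity
      have : K/N' * (2*ε)^2 = (2*ε*r)^2 := by rw [← hr2]; ring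
      rw [this]
      nlinarith [Real.pi_pos]
  obtain ⟨v, v', φ, φ', σ, hv, hv', hφ, hφ', hφpos, hv0, hv1, hσnn, hσeq, hσval⟩ :=
    exists_comparison K N' hN' h01 hsmall (u t₀) (u t₁)
  -- CD inequality gives v ≤ u on the interval
  have hvle : ∀ p ∈ Icc t₀ t₁, v p ≤ u p := by
    intro p hp
    set s := (p - t₀)/(t₁ - t₀) with hsdef
    have hθpos : 0 < t₁ - t₀ := sub_pos.mpr h01
    have hs : s ∈ Icc (0:ℝ) 1 := by
      constructor
      · exact div_nonneg (by linarith [hp.1]) hθpos.le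
      · rw [hsdef, div_le_one hθpos]; linarith [hp.2]
    have hps : (1-s)*t₀+s*t₁ = p := by
      rw [hsdef]; field_simp; ring
    have hineq := hcd t₀ ht₀mem t₁ ht₁mem h01 s hs
    rw [hps] at hineq
    have hσnn1 : 0 ≤ σ (1-s) := hσnn (1-s) ⟨by linarith [hs.2], by linarith [hs.1]⟩
    have hσnn2 : 0 ≤ σ s := hσnn s hs
    rw [hσeq (1-s), hσeq s, ← ENNReal.ofReal_mul hσnn1, ← ENNReal.ofReal_mul hσnn2,
      ← ENNReal.ofReal_add (mul_nonneg hσnn1 (hupos t₀ ht₀mem).le)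
        (mul_nonneg hσnn2 (hupos t₁ ht₁mem).le)] at hineq
    have hreal := (ENNReal.ofReal_le_ofReal_iff (hupos p (hIsub' hp)).le).mp hineq
    have h2 := hσval s
    rw [hps] at h2
    linarith
  -- strict Sturm comparison gives u < v at the midpoint
  have hw : ∀ t ∈ Icc t₀ t₁, HasDerivAt (fun t => u t - v t) (u' t - v' t) t :=
    fun t ht => (hu t (hIsub' ht)).sub (hv t)
  have hw' : ∀ t ∈ Icc t₀ t₁, HasDerivAt (fun t => u' t - v' t)
      (u'' t + (K/N') * v t) t := by
    intro t ht
    have H := (hu' t (hIsub' ht)).sub (hv' t)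
    have : u'' t - -(K/N') * v t = u'' t + (K/N') * v t := by ring
    rwa [this] at H
  have hineq2 : ∀ t ∈ Icc t₀ t₁, 0 < (u'' t + (K/N') * v t) + (K/N') * (u t - v t) := by
    intro t ht
    have h2 : (u'' t + (K/N') * v t) + (K/N') * (u t - v t) = u'' t + (K/N') * u t := by ring
    rw [h2]
    exact hstrict t ht
  have hmid := sturm_strict h01 hw hw' hφ hφ' hφpos (fun t => rfl) hineq2
    (by simp [hv0]) (by simp [hv1])
  have hmid2 : (t₀ + t₁)/2 = t₂ := by rw [ht₀def, ht₁def]; ring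
  rw [hmid2] at hmid
  have := hvle t₂ ⟨by rw [ht₀def]; linarith, by rw [ht₁def]; linarith⟩
  linarith

/-- for a positive C² density h on an open interval, the differential inequality
(h^{1/(N−1)})'' + K/(N−1)·h^{1/(N−1)} ≤ 0 is equivalent to the CD(K,N) convexity inequality. -/
theorem stmt_5 (K N a b : ℝ) (hN : 1 < N) (hab : a < b)
    (h : ℝ → ℝ) (hpos : ∀ t ∈ Set.Ioo a b, 0 < h t)
    (hC2 : ContDiffOn ℝ 2 h (Set.Ioo a b)) :
    (∀ t ∈ Set.Ioo a b,
        deriv (deriv fun u => h u ^ (1/(N-1))) t + K/(N-1) * h t ^ (1/(N-1)) ≤ 0)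
      ↔ CDconv K N (Set.Ioo a b) h := by
  have hN' : 0 < N - 1 := by linarith
  have huC2 : ContDiffOn ℝ 2 (fun t => h t ^ (1/(N-1))) (Set.Ioo a b) :=
    hC2.rpow_const_of_ne (fun x hx => (hpos x hx).ne')
  have hupos : ∀ t ∈ Set.Ioo a b, 0 < (fun t => h t ^ (1/(N-1))) t :=
    fun t ht => Real.rpow_pos_of_pos (hpos t ht) _
  have hu : ∀ t ∈ Set.Ioo a b, HasDerivAt (fun t => h t ^ (1/(N-1)))
      (deriv (fun t => h t ^ (1/(N-1))) t) t :=
    fun t ht => ((huC2.differentiableOn (by norm_num)).differentiableAt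
      (isOpen_Ioo.mem_nhds ht)).hasDerivAt
  have hd1 : ContDiffOn ℝ 1 (deriv fun t => h t ^ (1/(N-1))) (Set.Ioo a b) :=
    huC2.deriv_of_isOpen isOpen_Ioo (by norm_num)
  have hu' : ∀ t ∈ Set.Ioo a b, HasDerivAt (deriv fun t => h t ^ (1/(N-1)))
      (deriv (deriv fun t => h t ^ (1/(N-1))) t) t :=
    fun t ht => ((hd1.differentiableOn one_ne_zero).differentiableAt
      (isOpen_Ioo.mem_nhds ht)).hasDerivAt
  have hu''cont : ContinuousOn (deriv (deriv fun t => h t ^ (1/(N-1)))) (Set.Ioo a b) :=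
    (hd1.deriv_of_isOpen (m := 0) isOpen_Ioo (by norm_num)).continuousOn
  constructor
  · intro hode t₀ ht₀ t₁ ht₁ h01 s hs
    exact main_forward hN' hu hu' hupos hode t₀ ht₀ t₁ ht₁ h01 s hs
  · intro hcd t ht
    exact main_backward hN' hu hu' hupos hu''cont hcd t ht
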